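/- The number of matrices Y ∈ Z^{d×d} with entries in {−β,…,β} and rank(Y) ≤ k (rank over the rationals) is at most (2β+1)^{dk} · ((2β+1)^k + 1)^{dk} · 2^d, and in particular is at most (2β+1)^{O(dk)} when entries and coefficients are polynomially bounded. -/

import Mathlib

open Submodule Set Module Matrix

/-- From any finite family one can select at most `finrank (span)` indices whose
vectors span the same space. -/
lemma stmt4_aux_span {V : Type*} [AddCommGroup V] [Module ℚ V]
    {d : ℕ} (f : Fin d → V) :
    ∃ S : Finset (Fin d),
      S.card ≤ finrank ℚ (span ℚ (Set.range f)) ∧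
      span ℚ (f '' ↑S) = span ℚ (Set.range f) := by
  classical
  obtain ⟨t, hts, hsp, hli⟩ := exists_linearIndependent ℚ (Set.range f)
  have htf : t.Finite := (Set.finite_range f).subset hts
  haveI : Fintype t := htf.fintype
  have hcard : t.toFinset.card = finrank ℚ (span ℚ (Set.range f)) := by
    rw [← hsp]; exact (finrank_span_set_eq_card hli).symm
  let sec : t → Fin d := fun x => (hts x.2).choose
  have hsecf : ∀ x : t, f (sec x) = (x : V) := fun x => (hts x.2).choose_spec
  refine ⟨t.toFinset.attach.image (fun x => sec ⟨x.1, Set.mem_toFinset.mp x.2⟩), ?_, ?_⟩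
  · calc (t.toFinset.attach.image _).card ≤ t.toFinset.attach.card := Finset.card_image_le
      _ = t.toFinset.card := Finset.card_attach
      _ = _ := hcard
  · apply le_antisymm
    · apply span_mono
      rintro v ⟨i, _, rfl⟩
      exact Set.mem_range_self i
    · rw [← hsp]
      apply span_mono
      intro v hv
      refine ⟨sec ⟨v, hv⟩, ?_, hsecf ⟨v, hv⟩⟩
      simp only [Finset.coe_image, Set.mem_image]
      exact ⟨⟨v, Set.mem_toFinset.mpr hv⟩, Finset.mem_coe.mpr (Finset.mem_attach _ _), rfl⟩

/-- One can select at most `k` rows of a `d × k` matrix such that any vector in the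
column span vanishing on those rows is zero. -/
lemma stmt4_aux_rows {d k : ℕ} (M : Matrix (Fin d) (Fin k) ℚ) :
    ∃ T : Finset (Fin d), T.card ≤ k ∧
      ∀ v ∈ span ℚ (Set.range Mᵀ), (∀ t ∈ T, v t = 0) → v = 0 := by
  obtain ⟨T, hTc, hTs⟩ := stmt4_aux_span (fun i => M i)
  refine ⟨T, hTc.trans ?_, ?_⟩
  · exact (Submodule.finrank_le _).trans (by simp)
  · intro v hv hvT
    replace hv : v ∈ LinearMap.range M.mulVecLin := by
      rw [Matrix.range_mulVecLin]; exact hv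
    obtain ⟨c, rfl⟩ := hv
    have hker : ∀ i, M i ∈ span ℚ ((fun i => M i) '' ↑T) := fun i =>
      hTs ▸ subset_span (Set.mem_range_self i)
    funext i
    set φ : (Fin k → ℚ) →ₗ[ℚ] ℚ :=
      { toFun := fun w => dotProduct w c
        map_add' := fun a b => add_dotProduct a b c
        map_smul' := fun r a => smul_dotProduct r a c } with hφ
    have hsub : span ℚ ((fun i => M i) '' ↑T) ≤ LinearMap.ker φ := by
      rw [span_le]
      rintro w ⟨t, ht, rfl⟩
      have := hvT t ht
      simpa [φ, Matrix.mulVecLin_apply, Matrix.mulVec] using this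
    have h2 := hsub (hker i)
    simpa [φ, Matrix.mulVecLin_apply, Matrix.mulVec] using h2

/-- The interval of allowed entries. -/
noncomputable def stmt4I (β : ℕ) : Finset ℤ := Finset.Icc (-(β : ℤ)) β

lemma stmt4I_zero (β : ℕ) : (0 : ℤ) ∈ stmt4I β := by
  simp only [stmt4I, Finset.mem_Icc]; omega

/-- Clamping an integer into the interval. -/
noncomputable def stmt4toI (β : ℕ) (z : ℤ) : stmt4I β :=
  if h : z ∈ stmt4I β then ⟨z, h⟩ else ⟨0, stmt4I_zero β⟩

lemma stmt4toI_coe {β : ℕ} {z : ℤ} (h : |z| ≤ (β : ℤ)) : ((stmt4toI β z : ℤ)) = z := by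
  have h' := abs_le.mp h
  have hz : z ∈ stmt4I β := by simp only [stmt4I, Finset.mem_Icc]; omega
  simp [stmt4toI, hz]

/-- Chosen spanning column index set. -/
noncomputable def stmt4S {d : ℕ} (Y : Matrix (Fin d) (Fin d) ℤ) : Finset (Fin d) :=
  (stmt4_aux_span ((Y.map (Int.cast : ℤ → ℚ))ᵀ)).choose

lemma stmt4S_card {d : ℕ} (Y : Matrix (Fin d) (Fin d) ℤ) :
    (stmt4S Y).card ≤ finrank ℚ (span ℚ (Set.range (Y.map (Int.cast : ℤ → ℚ))ᵀ)) :=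
  (stmt4_aux_span ((Y.map (Int.cast : ℤ → ℚ))ᵀ)).choose_spec.1

lemma stmt4S_span {d : ℕ} (Y : Matrix (Fin d) (Fin d) ℤ) :
    span ℚ ((Y.map (Int.cast : ℤ → ℚ))ᵀ '' ↑(stmt4S Y)) =
      span ℚ (Set.range (Y.map (Int.cast : ℤ → ℚ))ᵀ) :=
  (stmt4_aux_span ((Y.map (Int.cast : ℤ → ℚ))ᵀ)).choose_spec.2

/-- Chosen determining row set for a `d × k` rational matrix. -/
noncomputable def stmt4T {d k : ℕ} (M : Matrix (Fin d) (Fin k) ℚ) : Finset (Fin d) :=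
  (stmt4_aux_rows M).choose

lemma stmt4T_card {d k : ℕ} (M : Matrix (Fin d) (Fin k) ℚ) : (stmt4T M).card ≤ k :=
  (stmt4_aux_rows M).choose_spec.1

lemma stmt4T_ker {d k : ℕ} (M : Matrix (Fin d) (Fin k) ℚ) :
    ∀ v ∈ span ℚ (Set.range Mᵀ), (∀ t ∈ stmt4T M, v t = 0) → v = 0 :=
  (stmt4_aux_rows M).choose_spec.2

/-- Encoding the chosen spanning columns. -/
noncomputable def stmt4g {d : ℕ} (k β : ℕ) (Y : Matrix (Fin d) (Fin d) ℤ) :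
    Fin k → Fin d → stmt4I β := fun e i =>
  stmt4toI β (if h : (e : ℕ) < (stmt4S Y).card then
    Y i ((stmt4S Y).orderEmbOfFin rfl ⟨e, h⟩) else 0)

/-- The rational matrix built from the encoded spanning columns. -/
noncomputable def stmt4M {d : ℕ} (k β : ℕ) (Y : Matrix (Fin d) (Fin d) ℤ) :
    Matrix (Fin d) (Fin k) ℚ :=
  Matrix.of fun i e => ((stmt4g k β Y e i : ℤ) : ℚ)

/-- Encoding the determining rows. -/
noncomputable def stmt4B {d : ℕ} (k β : ℕ) (Y : Matrix (Fin d) (Fin d) ℤ) :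
    Fin d → Fin k → stmt4I β := fun j e =>
  stmt4toI β (if h : (e : ℕ) < (stmt4T (stmt4M k β Y)).card then
    Y ((stmt4T (stmt4M k β Y)).orderEmbOfFin rfl ⟨e, h⟩) j else 0)

lemma stmt4_exists_fin_emb {d k : ℕ} {S : Finset (Fin d)} (hk : S.card ≤ k) {j : Fin d}
    (hj : j ∈ S) : ∃ e : Fin k, ∃ h : (e : ℕ) < S.card, S.orderEmbOfFin rfl ⟨e, h⟩ = j := by
  have hjr : j ∈ Set.range (S.orderEmbOfFin rfl) := by
    rw [Finset.range_orderEmbOfFin]; exact hj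
  obtain ⟨e', he'⟩ := hjr
  exact ⟨⟨(e' : ℕ), lt_of_lt_of_le e'.2 hk⟩, e'.2, by rw [Fin.eta]; exact he'⟩

lemma stmt4_orderEmb_congr {d : ℕ} {S S' : Finset (Fin d)} (h : S' = S) {m : ℕ}
    (hm : m < S.card) (hm' : m < S'.card) :
    S'.orderEmbOfFin rfl ⟨m, hm'⟩ = S.orderEmbOfFin rfl ⟨m, hm⟩ := by subst h; rfl

lemma stmt4g_eq {d : ℕ} (k β : ℕ) (Y : Matrix (Fin d) (Fin d) ℤ) (e : Fin k) (i : Fin d)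
    {j : Fin d} (h : (e : ℕ) < (stmt4S Y).card)
    (hje : (stmt4S Y).orderEmbOfFin rfl ⟨e, h⟩ = j) :
    stmt4g k β Y e i = stmt4toI β (Y i j) := by
  unfold stmt4g; rw [dif_pos h, hje]

lemma stmt4B_eq {d : ℕ} (k β : ℕ) (Y : Matrix (Fin d) (Fin d) ℤ) (e : Fin k) (j : Fin d)
    {t : Fin d} (h : (e : ℕ) < (stmt4T (stmt4M k β Y)).card)
    (hte : (stmt4T (stmt4M k β Y)).orderEmbOfFin rfl ⟨e, h⟩ = t) :
    stmt4B k β Y j e = stmt4toI β (Y t j) := by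
  unfold stmt4B; rw [dif_pos h, hte]

set_option synthInstance.maxHeartbeats 1000000 in
/-- The number of matrices Y ∈ ℤ^{d×d} with entries in {-β,…,β} and rank (over ℚ)
at most k is at most (2β+1)^{dk} · ((2β+1)^k + 1)^{dk} · 2^d. -/
theorem stmt_4 (d k : ℕ) (β : ℕ) :
    {Y : Matrix (Fin d) (Fin d) ℤ |
        (∀ i j, |Y i j| ≤ (β : ℤ)) ∧
        (Y.map (Int.cast : ℤ → ℚ)).rank ≤ k}.ncard ≤
      (2 * β + 1) ^ (d * k) * ((2 * β + 1) ^ k + 1) ^ (d * k) * 2 ^ d := by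
  classical
  haveI : Nonempty (stmt4I β) := ⟨⟨0, stmt4I_zero β⟩⟩
  set s : Set (Matrix (Fin d) (Fin d) ℤ) :=
    {Y | (∀ i j, |Y i j| ≤ (β : ℤ)) ∧ (Y.map (Int.cast : ℤ → ℚ)).rank ≤ k} with hs
  -- the encoding
  set enc : Matrix (Fin d) (Fin d) ℤ →
      Finset (Fin d) × (Fin k → Fin d → stmt4I β) × (Fin d → Fin k → stmt4I β) :=
    fun Y => (stmt4S Y, stmt4g k β Y, stmt4B k β Y) with henc
  -- basic facts for members of s
  have hSk : ∀ Y ∈ s, (stmt4S Y).card ≤ k := by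
    rintro Y ⟨hYb, hYr⟩
    refine (stmt4S_card Y).trans ?_
    rw [Matrix.rank_eq_finrank_span_cols] at hYr
    exact hYr
  -- each column of Y lies in the span of the columns of stmt4M
  have hmemV : ∀ Y ∈ s, ∀ j : Fin d,
      (Y.map (Int.cast : ℤ → ℚ))ᵀ j ∈ span ℚ (Set.range (stmt4M k β Y)ᵀ) := by
    rintro Y hY j
    obtain ⟨hYb, hYr⟩ := hY
    have h1 : (Y.map (Int.cast : ℤ → ℚ))ᵀ j ∈
        span ℚ ((Y.map (Int.cast : ℤ → ℚ))ᵀ '' ↑(stmt4S Y)) := by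
      rw [stmt4S_span Y]; exact subset_span (Set.mem_range_self j)
    refine span_mono ?_ h1
    rintro x ⟨j', hj', rfl⟩
    obtain ⟨e, h, hje⟩ := stmt4_exists_fin_emb (hSk Y ⟨hYb, hYr⟩) hj'
    refine ⟨e, funext fun i => ?_⟩
    show ((stmt4g k β Y e i : ℤ) : ℚ) = (Y.map (Int.cast : ℤ → ℚ))ᵀ j' i
    rw [stmt4g_eq k β Y e i h hje, stmt4toI_coe (hYb i j')]
    simp [Matrix.map_apply]
  -- injectivity of the encoding on s
  have hinj : Set.InjOn enc s := by
    rintro Y hY Y' hY' heq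
    obtain ⟨hYb, hYr⟩ := hY
    obtain ⟨hYb', hYr'⟩ := hY'
    have hS : stmt4S Y = stmt4S Y' := congrArg Prod.fst heq
    have hg : stmt4g k β Y = stmt4g k β Y' := congrArg (fun p => p.2.1) heq
    have hB : stmt4B k β Y = stmt4B k β Y' := congrArg (fun p => p.2.2) heq
    have hM : stmt4M k β Y = stmt4M k β Y' := by
      unfold stmt4M; rw [hg]
    have hT : stmt4T (stmt4M k β Y) = stmt4T (stmt4M k β Y') := by rw [hM]
    -- rows in T agree
    have hrow : ∀ t ∈ stmt4T (stmt4M k β Y), ∀ j, Y t j = Y' t j := by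
      intro t ht j
      obtain ⟨e, h, hte⟩ := stmt4_exists_fin_emb (stmt4T_card (stmt4M k β Y)) ht
      have h' : (e : ℕ) < (stmt4T (stmt4M k β Y')).card := by rw [← hT]; exact h
      have hte' : (stmt4T (stmt4M k β Y')).orderEmbOfFin rfl ⟨e, h'⟩ = t := by
        rw [stmt4_orderEmb_congr hT.symm h h']; exact hte
      have e1 : ((stmt4B k β Y j e : ℤ)) = Y t j := by
        rw [stmt4B_eq k β Y e j h hte, stmt4toI_coe (hYb t j)]
      have e2 : ((stmt4B k β Y' j e : ℤ)) = Y' t j := by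
        rw [stmt4B_eq k β Y' e j h' hte', stmt4toI_coe (hYb' t j)]
      rw [← e1, ← e2, hB]
    -- conclude
    ext i j
    have hvmem : (Y.map (Int.cast : ℤ → ℚ))ᵀ j - (Y'.map (Int.cast : ℤ → ℚ))ᵀ j ∈
        span ℚ (Set.range (stmt4M k β Y)ᵀ) := by
      refine sub_mem (hmemV Y ⟨hYb, hYr⟩ j) ?_
      rw [hM]
      exact hmemV Y' ⟨hYb', hYr'⟩ j
    have hvT : ∀ t ∈ stmt4T (stmt4M k β Y),
        ((Y.map (Int.cast : ℤ → ℚ))ᵀ j - (Y'.map (Int.cast : ℤ → ℚ))ᵀ j) t = 0 := by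
      intro t ht
      have := hrow t ht j
      simp [Matrix.map_apply, this]
    have hv0 := stmt4T_ker (stmt4M k β Y) _ hvmem hvT
    have := congrFun hv0 i
    simp only [Pi.sub_apply, Matrix.transpose_apply, Matrix.map_apply, Pi.zero_apply,
      sub_eq_zero] at this
    exact_mod_cast this
  -- counting
  have hIcard : (stmt4I β).card = 2 * β + 1 := by
    rw [stmt4I, Int.card_Icc]; omega
  have hle := Set.ncard_le_ncard_of_injOn enc (fun Y _ => Set.mem_univ (enc Y)) hinj
    Set.finite_univ
  rw [Set.ncard_univ, Nat.card_eq_fintype_card] at hle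
  refine hle.trans ?_
  have hC : Fintype.card (Finset (Fin d) × (Fin k → Fin d → stmt4I β) ×
      (Fin d → Fin k → stmt4I β)) = 2 ^ d * ((2 * β + 1) ^ d) ^ k * ((2 * β + 1) ^ k) ^ d := by
    simp [Fintype.card_finset, Fintype.card_fun, Fintype.card_coe, hIcard, mul_assoc]
  rw [hC]
  have h2 : ((2 * β + 1) ^ k) ^ d ≤ ((2 * β + 1) ^ k + 1) ^ (d * k) := by
    rcases Nat.eq_zero_or_pos k with hk0 | hk1
    · subst hk0; simp
    · calc ((2 * β + 1) ^ k) ^ d ≤ ((2 * β + 1) ^ k + 1) ^ d :=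
            Nat.pow_le_pow_left (Nat.le_succ _) d
        _ ≤ ((2 * β + 1) ^ k + 1) ^ (d * k) :=
            Nat.pow_le_pow_right (Nat.le_add_left _ _) (Nat.le_mul_of_pos_right d hk1)
  calc 2 ^ d * ((2 * β + 1) ^ d) ^ k * ((2 * β + 1) ^ k) ^ d
      ≤ 2 ^ d * ((2 * β + 1) ^ d) ^ k * ((2 * β + 1) ^ k + 1) ^ (d * k) :=
        Nat.mul_le_mul_left _ h2
    _ = (2 * β + 1) ^ (d * k) * ((2 * β + 1) ^ k + 1) ^ (d * k) * 2 ^ d := by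
        rw [← pow_mul]; ring
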